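/- arXiv:1610.07377 — 2 statements merged into one kernel-verified Lean document; each statement's English description precedes it below -/
import Mathlib

section
/- Let $\gamma(t) = \begin{pmatrix} a(t) & b(t) \\ c(t) & d(t) \end{pmatrix}$ be a matrix with entries in $\mathbb{C}[[t]]$ and determinant $1$, such that for all $t$ the matrix $\gamma(t)$ fixes the pair of points $([0 : t^{-1}], [t : t^{-1}]) \in \mathbb{P}^1 \times \mathbb{P}^1$ under the diagonal linear action of $SL(2)$ on $\mathbb{P}^1 \times \mathbb{P}^1$. Then $b(t) = 0$, $a(t)d(t) = 1$, $a(t) - d(t) = t^2 c(t)$, and the constant terms satisfy $a_0 = d_0 \in \{1,-1\}$. Consequently the limit $\gamma(0)$ belongs to the group $U_2 = \left\{ \begin{pmatrix} \lambda & 0 \\ u & \lambda \end{pmatrix} : u \in \mathbb{C},\ \lambda^2 = 1 \right\}$. -/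
open PowerSeries

lemma coe_inj (x y : PowerSeries ℂ) (h : (x : LaurentSeries ℂ) = (y : LaurentSeries ℂ)) : x = y :=
  HahnSeries.ofPowerSeries_injective h

/-- If `γ(t) = !![a t, b t; c t, d t] ∈ SL(2, ℂ[[t]])` fixes the pair of points
`([0 : t⁻¹], [t : t⁻¹]) ∈ ℙ¹ × ℙ¹` (i.e. the image of each homogeneous
coordinate vector is a nonzero scalar multiple of itself, computed in the
field of formal Laurent series), then `b = 0`, `a d = 1`, `a - d = t² c`,
the constant terms satisfy `a₀ = d₀ ∈ {1,-1}`, and `γ(0)` belongs to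
`U₂ = {!![λ, 0; u, λ] : u ∈ ℂ, λ² = 1}`. -/
theorem stmt3 (a b c d : PowerSeries ℂ) (hdet : a * d - b * c = 1)
    (T : LaurentSeries ℂ) (hT : T = (PowerSeries.X : PowerSeries ℂ))
    (h1 : ∃ α : LaurentSeries ℂ, α ≠ 0 ∧
      (a : LaurentSeries ℂ) * 0 + (b : LaurentSeries ℂ) * T⁻¹ = α * 0 ∧
      (c : LaurentSeries ℂ) * 0 + (d : LaurentSeries ℂ) * T⁻¹ = α * T⁻¹)
    (h2 : ∃ β : LaurentSeries ℂ, β ≠ 0 ∧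
      (a : LaurentSeries ℂ) * T + (b : LaurentSeries ℂ) * T⁻¹ = β * T ∧
      (c : LaurentSeries ℂ) * T + (d : LaurentSeries ℂ) * T⁻¹ = β * T⁻¹) :
    b = 0 ∧ a * d = 1 ∧ a - d = PowerSeries.X ^ 2 * c ∧
      PowerSeries.coeff 0 a = PowerSeries.coeff 0 d ∧
      (PowerSeries.coeff 0 a = 1 ∨ PowerSeries.coeff 0 a = -1) ∧
      ∃ lam u : ℂ, lam ^ 2 = 1 ∧
        !![PowerSeries.coeff 0 a, PowerSeries.coeff 0 b;
           PowerSeries.coeff 0 c, PowerSeries.coeff 0 d] = !![lam, 0; u, lam] := by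
  obtain ⟨α, hα, h1a, h1b⟩ := h1
  obtain ⟨β, hβ, h2a, h2b⟩ := h2
  have hT0 : T ≠ 0 := by
    rw [hT]
    intro h
    have : (PowerSeries.X : PowerSeries ℂ) = 0 := coe_inj _ _ (by simpa using h)
    exact PowerSeries.X_ne_zero this
  have hTi : T⁻¹ ≠ 0 := inv_ne_zero hT0
  -- b = 0
  have hb : b = 0 := by
    apply coe_inj
    simp only [mul_zero, zero_add] at h1a
    rcases mul_eq_zero.mp h1a with h | h
    · simpa using h
    · exact absurd h hTi
  have hbL : (b : LaurentSeries ℂ) = 0 := by rw [hb]; simp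
  -- d = α
  have hdα : (d : LaurentSeries ℂ) = α := by
    simp only [mul_zero, zero_add] at h1b
    exact mul_right_cancel₀ hTi h1b
  -- a = β
  have haβ : (a : LaurentSeries ℂ) = β := by
    rw [hbL, zero_mul, add_zero] at h2a
    exact mul_right_cancel₀ hT0 h2a
  -- a = c T² + d
  have key : (a : LaurentSeries ℂ) = (c : LaurentSeries ℂ) * T ^ 2 + (d : LaurentSeries ℂ) := by
    have := congrArg (· * T) h2b
    simp only [add_mul, mul_assoc, inv_mul_cancel₀ hT0, mul_one] at this
    rw [← haβ] at this
    rw [← this]; ring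
  have had : a - d = PowerSeries.X ^ 2 * c := by
    apply coe_inj
    push_cast
    rw [← hT, key]; ring
  have had1 : a * d = 1 := by
    have : a * d - b * c = a * d := by rw [hb]; ring
    rw [← this, hdet]
  -- constant coefficients
  have hc0 : PowerSeries.coeff 0 a = PowerSeries.coeff 0 d := by
    have h := congrArg (PowerSeries.coeff 0) had
    rw [map_sub] at h
    have h2 : (PowerSeries.coeff 0) (PowerSeries.X ^ 2 * c) = 0 := by
      rw [pow_two, mul_assoc, PowerSeries.coeff_zero_eq_constantCoeff]
      simp
    rw [h2, sub_eq_zero] at h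
    exact h
  have hmul : PowerSeries.coeff 0 a * PowerSeries.coeff 0 d = 1 := by
    have h := congrArg (PowerSeries.constantCoeff) had1
    rw [map_mul, map_one] at h
    simpa [PowerSeries.coeff_zero_eq_constantCoeff] using h
  have hsq : PowerSeries.coeff 0 a * PowerSeries.coeff 0 a = 1 := by
    rw [hc0] at hmul ⊢; exact hmul
  have hone : PowerSeries.coeff 0 a = 1 ∨ PowerSeries.coeff 0 a = -1 :=
    mul_self_eq_one_iff.mp hsq
  refine ⟨hb, had1, had, hc0, hone, PowerSeries.coeff 0 a, PowerSeries.coeff 0 c, ?_, ?_⟩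
  · rw [sq]; exact hsq
  · rw [hb, hc0]; simp
end

section
/- Let $\gamma(t) = \begin{pmatrix} a(t) & b(t) \\ c(t) & d(t) \end{pmatrix}$ be a matrix with entries in $\mathbb{C}[[t]]$ and determinant $1$, and suppose there exists $\mu \in \mathbb{C}^*$ such that $\gamma(t) \begin{pmatrix} 0 & t \\ t^{-1} & 0 \end{pmatrix} = \begin{pmatrix} 0 & \mu t \\ \mu t^{-1} & 0 \end{pmatrix} \gamma(t)$ for all $t$. Then $\mu^2 = 1$, the first two coefficients of $b(t)$ vanish, and the limit $\gamma(0)$ belongs to the group $U_4 = \left\{ \begin{pmatrix} \lambda & 0 \\ u & \lambda^{-1} \end{pmatrix} : u \in \mathbb{C},\ \lambda^4 = 1 \right\}$. -/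
open Matrix

/-- If `γ(t) ∈ SL(2, ℂ[[t]])` satisfies
`γ(t) * !![0, t; t⁻¹, 0] = μ • !![0, t; t⁻¹, 0] * γ(t)` for some `μ ∈ ℂ*`
(computed over the field of formal Laurent series), then `μ² = 1`, the first
two coefficients of `b` vanish, and the limit `γ(0)` belongs to
`U₄ = {!![λ, 0; u, λ⁻¹] : u ∈ ℂ, λ⁴ = 1}`. -/
theorem stmt4 (a b c d : PowerSeries ℂ) (hdet : a * d - b * c = 1)
    (T : LaurentSeries ℂ) (hT : T = (PowerSeries.X : PowerSeries ℂ))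
    (μ : ℂ) (hμ : μ ≠ 0)
    (h : !![(a : LaurentSeries ℂ), (b : LaurentSeries ℂ);
            (c : LaurentSeries ℂ), (d : LaurentSeries ℂ)] * !![0, T; T⁻¹, 0] =
         (μ • !![0, T; T⁻¹, 0]) * !![(a : LaurentSeries ℂ), (b : LaurentSeries ℂ);
            (c : LaurentSeries ℂ), (d : LaurentSeries ℂ)]) :
    μ ^ 2 = 1 ∧ PowerSeries.coeff (R := ℂ) 0 b = 0 ∧ PowerSeries.coeff (R := ℂ) 1 b = 0 ∧
      ∃ lam u : ℂ, lam ^ 4 = 1 ∧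
        !![PowerSeries.coeff (R := ℂ) 0 a, PowerSeries.coeff (R := ℂ) 0 b;
           PowerSeries.coeff (R := ℂ) 0 c, PowerSeries.coeff (R := ℂ) 0 d] = !![lam, 0; u, lam⁻¹] := by
  have h01 := congrFun (congrFun h 0) 1
  have h10 := congrFun (congrFun h 1) 0
  have h00 := congrFun (congrFun h 0) 0
  simp [Matrix.mul_apply, Fin.sum_univ_two] at h01 h10 h00
  simp only [← HahnSeries.C_mul_eq_smul] at h01 h10 h00
  clear h
  have hT0 : T ≠ 0 := by
    rw [hT]
    intro hc
    have := HahnSeries.ofPowerSeries_injective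
      (hc.trans (HahnSeries.ofPowerSeries ℤ ℂ).map_zero.symm)
    exact PowerSeries.X_ne_zero this
  set M : LaurentSeries ℂ := HahnSeries.C μ with hM
  -- Laurent series relations
  have hA : (a : LaurentSeries ℂ) = M * (d : LaurentSeries ℂ) :=
    mul_right_cancel₀ hT0 (by rw [h01]; ring)
  have hD : (d : LaurentSeries ℂ) = M * (a : LaurentSeries ℂ) :=
    mul_right_cancel₀ (inv_ne_zero hT0) (by rw [h10]; ring)
  have hB : (b : LaurentSeries ℂ) = M * (T ^ 2 * (c : LaurentSeries ℂ)) := by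
    have h1 : (b : LaurentSeries ℂ) = ((b : LaurentSeries ℂ) * T⁻¹) * T := by
      rw [mul_assoc, inv_mul_cancel₀ hT0, mul_one]
    rw [h1, h00]; ring
  -- transfer to power series
  have hAp : a = PowerSeries.C (R := ℂ) μ * d := by
    apply HahnSeries.ofPowerSeries_injective (Γ := ℤ) (R := ℂ)
    rw [PowerSeries.coe_mul, PowerSeries.coe_C]
    exact hA
  have hDp : d = PowerSeries.C (R := ℂ) μ * a := by
    apply HahnSeries.ofPowerSeries_injective (Γ := ℤ) (R := ℂ)
    rw [PowerSeries.coe_mul, PowerSeries.coe_C]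
    exact hD
  have hBp : b = PowerSeries.C (R := ℂ) μ * (PowerSeries.X ^ 2 * c) := by
    apply HahnSeries.ofPowerSeries_injective (Γ := ℤ) (R := ℂ)
    rw [PowerSeries.coe_mul, PowerSeries.coe_C, PowerSeries.coe_mul, PowerSeries.coe_pow, ← hT]
    exact hB
  clear hA hD hB h01 h10 h00
  -- μ ^ 2 = 1
  have hμ2 : μ ^ 2 = 1 := by
    by_cases had : a = 0 ∧ d = 0
    · exfalso
      rw [had.1, had.2, hBp] at hdet
      have := congrArg (PowerSeries.constantCoeff (R := ℂ)) hdet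
      simp [pow_two, mul_assoc] at this
    · have key : ∀ x : PowerSeries ℂ, x ≠ 0 → x = PowerSeries.C (R := ℂ) μ * (PowerSeries.C (R := ℂ) μ * x) →
          μ ^ 2 = 1 := by
        intro x hx hxx
        have h2 : (PowerSeries.C (R := ℂ) (μ ^ 2) - 1) * x = 0 := by
          rw [sub_mul, one_mul, sub_eq_zero, pow_two, _root_.map_mul, mul_assoc, ← hxx]
        rcases mul_eq_zero.mp h2 with h3 | h3
        · have h4 : PowerSeries.C (R := ℂ) (μ ^ 2) = PowerSeries.C (R := ℂ) 1 := by
            rw [_root_.map_one, ← sub_eq_zero, h3]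
          exact PowerSeries.C_injective h4
        · exact absurd h3 hx
      rcases not_and_or.mp had with ha | hd
      · exact key a ha (by conv_lhs => rw [hAp, hDp])
      · exact key d hd (by conv_lhs => rw [hDp, hAp])
  -- coefficients of b
  have hb0 : PowerSeries.coeff (R := ℂ) 0 b = 0 := by
    rw [hBp]; simp [pow_two, mul_assoc]
  have hb1 : PowerSeries.coeff (R := ℂ) 1 b = 0 := by
    rw [hBp]; simp [pow_two, mul_assoc, PowerSeries.coeff_succ_X_mul, PowerSeries.coeff_zero_X_mul]
  refine ⟨hμ2, hb0, hb1, PowerSeries.coeff (R := ℂ) 0 a, PowerSeries.coeff (R := ℂ) 0 c, ?_, ?_⟩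
  all_goals {
    have hdet0 := congrArg (PowerSeries.constantCoeff (R := ℂ)) hdet
    simp only [_root_.map_sub, _root_.map_mul, _root_.map_one] at hdet0
    have hb0' : PowerSeries.constantCoeff (R := ℂ) b = 0 := by
      rw [← PowerSeries.coeff_zero_eq_constantCoeff]; exact hb0
    rw [hb0', zero_mul, sub_zero] at hdet0
    have hA0 : PowerSeries.constantCoeff (R := ℂ) a = μ * PowerSeries.constantCoeff (R := ℂ) d := by
      rw [hAp]; simp
    first
    | · -- lam ^ 4 = 1
        have hsq : (PowerSeries.constantCoeff (R := ℂ) a) ^ 2 = μ := by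
          linear_combination (PowerSeries.constantCoeff (R := ℂ) a) * hA0 + μ * hdet0
        have h4 : (PowerSeries.coeff (R := ℂ) 0 a) ^ 4 = μ ^ 2 := by
          rw [PowerSeries.coeff_zero_eq_constantCoeff, ← hsq]; ring
        rw [hμ2] at h4
        exact h4
    | · -- matrix equality
        have ha0 : PowerSeries.constantCoeff (R := ℂ) a ≠ 0 := by
          intro hc; rw [hc, zero_mul] at hdet0; exact zero_ne_one hdet0
        have hd0 : PowerSeries.constantCoeff (R := ℂ) d = (PowerSeries.constantCoeff (R := ℂ) a)⁻¹ :=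
          eq_inv_of_mul_eq_one_right hdet0
        ext i j
        fin_cases i <;> fin_cases j <;>
          simp [PowerSeries.coeff_zero_eq_constantCoeff, hb0, hd0]
  }
end
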